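/- Let $k\ge 5$ and let $\omega\colon B_k\to S_k$ be a non-cyclic homomorphism with $\omega(\sigma_i)=(i,i+1)$ for all $i\ne k-2$ (with $1\le i\le k-1$). Then $\omega(\sigma_{k-2})$ equals $(k-2,k-1)$ or $(k-2,k)$. -/

import Mathlib

set_option linter.all false in
set_option maxHeartbeats 1000000 in
/-- Let `k ≥ 5` and let `ω : B_k → S_k` be a non-cyclic homomorphism (encoded by the
images `s i` of the generators satisfying the braid relations) with
`ω(σᵢ) = (i, i+1)` for all `i ≠ k-2`, `1 ≤ i ≤ k-1` (written with `Fin k`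
zero-indexing: the transposition of `i-1` and `i`).  Then `ω(σ_{k-2})` equals
`(k-2, k-1)` or `(k-2, k)`. -/
theorem missing_mu (k : ℕ) (hk : 5 ≤ k)
    (s : ℕ → Equiv.Perm (Fin k))
    (hbraid : ∀ i, 1 ≤ i → i + 1 ≤ k - 1 →
      s i * s (i + 1) * s i = s (i + 1) * s i * s (i + 1))
    (hcomm : ∀ i j, 1 ≤ i → j ≤ k - 1 → i + 2 ≤ j → s i * s j = s j * s i)
    (hnc : ¬ IsCyclic ↥(Subgroup.closure
      {g : Equiv.Perm (Fin k) | ∃ i, 1 ≤ i ∧ i ≤ k - 1 ∧ g = s i}))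
    (hs : ∀ i (h1 : 1 ≤ i) (h2 : i ≤ k - 1), i ≠ k - 2 →
      s i = Equiv.swap (⟨i - 1, by omega⟩ : Fin k) (⟨i, by omega⟩ : Fin k)) :
    s (k - 2) = Equiv.swap (⟨k - 3, by omega⟩ : Fin k) (⟨k - 2, by omega⟩ : Fin k) ∨
    s (k - 2) = Equiv.swap (⟨k - 3, by omega⟩ : Fin k) (⟨k - 1, by omega⟩ : Fin k) := by
  clear hnc
  have hk4 : k - 4 < k := by omega
  have hk3 : k - 3 < k := by omega
  have hk2 : k - 2 < k := by omega
  have hk1 : k - 1 < k := by omega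
  set t : Equiv.Perm (Fin k) := s (k - 2) with htdef
  set p4 : Fin k := ⟨k - 4, hk4⟩ with hp4
  set p3 : Fin k := ⟨k - 3, hk3⟩ with hp3
  set p2 : Fin k := ⟨k - 2, hk2⟩ with hp2
  set p1 : Fin k := ⟨k - 1, hk1⟩ with hp1
  have ne43 : p4 ≠ p3 := Fin.ne_of_val_ne (show k - 4 ≠ k - 3 by omega)
  have ne32 : p3 ≠ p2 := Fin.ne_of_val_ne (show k - 3 ≠ k - 2 by omega)
  have ne31 : p3 ≠ p1 := Fin.ne_of_val_ne (show k - 3 ≠ k - 1 by omega)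
  have ne21 : p2 ≠ p1 := Fin.ne_of_val_ne (show k - 2 ≠ k - 1 by omega)
  have ha : s (k - 3) = Equiv.swap p4 p3 := by
    rw [hs (k - 3) (by omega) (by omega) (by omega)]
    simp only [show k - 3 - 1 = k - 4 from by omega]
    rfl
  have hb : s (k - 1) = Equiv.swap p2 p1 := by
    rw [hs (k - 1) (by omega) (by omega) (by omega)]
    simp only [show k - 1 - 1 = k - 2 from by omega]
    rfl
  have hba := hbraid (k - 3) (by omega) (by omega)
  rw [show k - 3 + 1 = k - 2 from by omega, ha, ← htdef] at hba
  have hbb := hbraid (k - 2) (by omega) (by omega)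
  rw [show k - 2 + 1 = k - 1 from by omega, hb, ← htdef] at hbb
  have hbaP : ∀ z, Equiv.swap p4 p3 (t (Equiv.swap p4 p3 z))
      = t (Equiv.swap p4 p3 (t z)) := by
    intro z
    have := Equiv.ext_iff.mp hba z
    simpa [Equiv.Perm.mul_apply] using this
  have hbbP : ∀ z, t (Equiv.swap p2 p1 (t z))
      = Equiv.swap p2 p1 (t (Equiv.swap p2 p1 z)) := by
    intro z
    have := Equiv.ext_iff.mp hbb z
    simpa [Equiv.Perm.mul_apply] using this
  have key : ∀ i (h1 : 1 ≤ i) (h2 : i ≤ k - 4),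
      t ⟨i - 1, by omega⟩ = ⟨i - 1, by omega⟩ ∧ t ⟨i, by omega⟩ = ⟨i, by omega⟩ := by
    intro i h1 h2
    have hc := hcomm i (k - 2) h1 (by omega) (by omega)
    rw [hs i h1 (by omega) (by omega), ← htdef] at hc
    set x : Fin k := (⟨i - 1, by omega⟩ : Fin k) with hx
    set y : Fin k := (⟨i, by omega⟩ : Fin k) with hy
    have hxy : x ≠ y := Fin.ne_of_val_ne (show i - 1 ≠ i by omega)
    have h0 : Equiv.swap x y (t x) = t y := by
      have := Equiv.ext_iff.mp hc x
      simpa [Equiv.Perm.mul_apply, Equiv.swap_apply_left] using this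
    rcases eq_or_ne (t x) x with hxx | hxx
    · refine ⟨hxx, ?_⟩
      rw [← h0, hxx, Equiv.swap_apply_left]
    rcases eq_or_ne (t x) y with hxy2 | hxy2
    · exfalso
      have hty : t y = x := by rw [← h0, hxy2, Equiv.swap_apply_right]
      have hP := hbbP x
      have bx : Equiv.swap p2 p1 x = x :=
        Equiv.swap_apply_of_ne_of_ne (Fin.ne_of_val_ne (show i - 1 ≠ k - 2 by omega))
          (Fin.ne_of_val_ne (show i - 1 ≠ k - 1 by omega))
      have by' : Equiv.swap p2 p1 y = y :=
        Equiv.swap_apply_of_ne_of_ne (Fin.ne_of_val_ne (show i ≠ k - 2 by omega))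
          (Fin.ne_of_val_ne (show i ≠ k - 1 by omega))
      simp only [hxy2, by', hty, bx] at hP
      exact hxy hP
    · exfalso
      rw [Equiv.swap_apply_of_ne_of_ne hxx hxy2] at h0
      exact hxy (t.injective h0)
  have hfix : ∀ j : ℕ, j ≤ k - 4 → ∀ (h : j < k), t ⟨j, h⟩ = ⟨j, h⟩ := by
    intro j hj h
    rcases Nat.eq_zero_or_pos j with h0 | h0
    · subst h0
      exact (key 1 le_rfl (by omega)).1
    · exact (key j h0 hj).2
  have hge : ∀ z : Fin k, k - 3 ≤ z.val → k - 3 ≤ (t z).val := by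
    intro z hz
    by_contra hcon
    push_neg at hcon
    have hle : (t z).val ≤ k - 4 := by omega
    have h2 := hfix (t z).val hle (t z).isLt
    rw [Fin.eta] at h2
    have h3 := t.injective h2
    have h4 := congrArg Fin.val h3
    omega
  have ht4 : t p4 = p4 := hfix (k - 4) le_rfl hk4
  have aL : Equiv.swap p4 p3 p4 = p3 := Equiv.swap_apply_left _ _
  have aR : Equiv.swap p4 p3 p3 = p4 := Equiv.swap_apply_right _ _
  have a2 : Equiv.swap p4 p3 p2 = p2 :=
    Equiv.swap_apply_of_ne_of_ne (Fin.ne_of_val_ne (show k - 2 ≠ k - 4 by omega))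
      (Fin.ne_of_val_ne (show k - 2 ≠ k - 3 by omega))
  have a1 : Equiv.swap p4 p3 p1 = p1 :=
    Equiv.swap_apply_of_ne_of_ne (Fin.ne_of_val_ne (show k - 1 ≠ k - 4 by omega))
      (Fin.ne_of_val_ne (show k - 1 ≠ k - 3 by omega))
  have tri : ∀ z : Fin k, k - 3 ≤ z.val → t z = p3 ∨ t z = p2 ∨ t z = p1 := by
    intro z hz
    have h1 := hge z hz
    have h2 := (t z).isLt
    have h3 : (t z).val = k - 3 ∨ (t z).val = k - 2 ∨ (t z).val = k - 1 := by omega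
    rcases h3 with h | h | h
    · exact Or.inl (Fin.ext h)
    · exact Or.inr (Or.inl (Fin.ext h))
    · exact Or.inr (Or.inr (Fin.ext h))
  rcases tri p3 (le_refl (k - 3)) with e3 | e3 | e3
  · -- t p3 = p3 : contradiction via braid at p3
    exfalso
    have hP := hbaP p3
    simp only [aR, ht4, aL, e3] at hP
    exact ne43 hP.symm
  · -- t p3 = p2
    rcases tri p2 (show k - 3 ≤ k - 2 by omega) with e2 | e2 | e2
    · -- t p2 = p3 : conclusion (left), with t p1 = p1
      have e1 : t p1 = p1 := by
        rcases tri p1 (show k - 3 ≤ k - 1 by omega) with h | h | h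
        · exact absurd (t.injective (h.trans e2.symm)) (Ne.symm ne21)
        · exact absurd (t.injective (h.trans e3.symm)) (Ne.symm ne31)
        · exact h
      left
      refine Equiv.ext fun z => ?_
      by_cases hz3 : z = p3
      · rw [hz3, e3, Equiv.swap_apply_left]
      by_cases hz2 : z = p2
      · rw [hz2, e2, Equiv.swap_apply_right]
      by_cases hz1 : z = p1
      · rw [hz1, e1, Equiv.swap_apply_of_ne_of_ne (Ne.symm ne31) (Ne.symm ne21)]
      · have hzv : z.val ≤ k - 4 := by
          have h1 := z.isLt
          have h3 : z.val ≠ k - 3 := fun h => hz3 (Fin.ext h)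
          have h2 : z.val ≠ k - 2 := fun h => hz2 (Fin.ext h)
          have h5 : z.val ≠ k - 1 := fun h => hz1 (Fin.ext h)
          omega
        rw [Equiv.swap_apply_of_ne_of_ne hz3 hz2]
        have := hfix z.val hzv z.isLt
        rwa [Fin.eta] at this
    · -- t p2 = p2 : contradiction by injectivity with e3
      exact absurd (t.injective (e3.trans e2.symm)) ne32
    · -- t p2 = p1 : contradiction via braid at p3
      exfalso
      have hP := hbaP p3
      simp only [aR, ht4, aL, e3, a2, e2] at hP
      exact ne31 hP
  · -- t p3 = p1
    rcases tri p1 (show k - 3 ≤ k - 1 by omega) with e1 | e1 | e1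
    · -- t p1 = p3 : conclusion (right), with t p2 = p2
      have e2 : t p2 = p2 := by
        rcases tri p2 (show k - 3 ≤ k - 2 by omega) with h | h | h
        · exact absurd (t.injective (h.trans e1.symm)) ne21
        · exact h
        · exact absurd (t.injective (h.trans e3.symm)) (Ne.symm ne32)
      right
      refine Equiv.ext fun z => ?_
      by_cases hz3 : z = p3
      · rw [hz3, e3, Equiv.swap_apply_left]
      by_cases hz1 : z = p1
      · rw [hz1, e1, Equiv.swap_apply_right]
      by_cases hz2 : z = p2
      · rw [hz2, e2, Equiv.swap_apply_of_ne_of_ne (Ne.symm ne32) ne21]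
      · have hzv : z.val ≤ k - 4 := by
          have h1 := z.isLt
          have h3 : z.val ≠ k - 3 := fun h => hz3 (Fin.ext h)
          have h2 : z.val ≠ k - 2 := fun h => hz2 (Fin.ext h)
          have h5 : z.val ≠ k - 1 := fun h => hz1 (Fin.ext h)
          omega
        rw [Equiv.swap_apply_of_ne_of_ne hz3 hz1]
        have := hfix z.val hzv z.isLt
        rwa [Fin.eta] at this
    · -- t p1 = p2 : contradiction via braid at p3
      exfalso
      have hP := hbaP p3
      simp only [aR, ht4, aL, e3, a1, e1] at hP
      exact ne32 hP
    · -- t p1 = p1 : contradiction by injectivity with e3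
      exact absurd (t.injective (e3.trans e1.symm)) ne31
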